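/- arXiv:1606.00730 — 2 statements merged into one kernel-verified Lean document; each statement's English description precedes it below -/
import Mathlib

section
/- Suppose (C₁,…,C_m) is a partition of {1,…,3m} with |C_ℓ| = 3 and Σ_{i ∈ C_ℓ} αᵢ = W for each ℓ, where W/4 < αᵢ < W/2. Then the bipartite gadget graph built from this partition (atoms–weight points–basket points) realizes the prescribed second order degree sequence: each atom attached to weight point i has (d, d₂) = (1, αᵢ), each weight point i has (d, d₂) = (αᵢ+1, 2), and each basket point has (d, d₂) = (3, W). -/
open SimpleGraph Finset

/-- The bipartite gadget graph for the 3-Partition reduction: for each `i` there are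
`α i` atoms joined only to the weight point `i`; the basket point `ℓ` is joined
exactly to the weight points `i` with `i ∈ C ℓ`. -/
def gadget (m : ℕ) (α : Fin (3 * m) → ℕ) (C : Fin m → Finset (Fin (3 * m))) :
    SimpleGraph ((Σ i : Fin (3 * m), Fin (α i)) ⊕ (Fin (3 * m) ⊕ Fin m)) :=
  SimpleGraph.fromRel (fun x y =>
    match x, y with
    | Sum.inl ⟨i, _⟩, Sum.inr (Sum.inl i') => i = i'
    | Sum.inr (Sum.inl i), Sum.inr (Sum.inr ℓ) => i ∈ C ℓ
    | _, _ => False)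

lemma dist_eq_two_iff' {V : Type*} (G : SimpleGraph V) {v u : V} :
    G.dist v u = 2 ↔ v ≠ u ∧ ¬G.Adj v u ∧ ∃ w, G.Adj v w ∧ G.Adj w u := by
  constructor
  · intro h
    obtain ⟨p, hp⟩ := exists_walk_of_dist_ne_zero (by omega : G.dist v u ≠ 0)
    rw [h] at hp
    match p, hp with
    | SimpleGraph.Walk.cons h1 (SimpleGraph.Walk.cons h2 SimpleGraph.Walk.nil), _ =>
      refine ⟨?_, ?_, _, h1, h2⟩
      · rintro rfl
        rw [G.dist_self] at h; omega
      · intro hadj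
        rw [← dist_eq_one_iff_adj] at hadj; omega
  · rintro ⟨hne, hna, w, h1, h2⟩
    have hle := G.dist_le (SimpleGraph.Walk.cons h1 (SimpleGraph.Walk.cons h2 SimpleGraph.Walk.nil))
    simp only [SimpleGraph.Walk.length_cons, SimpleGraph.Walk.length_nil] at hle
    have h0 : G.dist v u ≠ 0 := by
      rw [ne_eq, dist_eq_zero_iff_eq_or_not_reachable]
      push_neg
      exact ⟨hne, ⟨SimpleGraph.Walk.cons h1 (SimpleGraph.Walk.cons h2 SimpleGraph.Walk.nil)⟩⟩
    have h1' : G.dist v u ≠ 1 := by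
      rw [ne_eq, dist_eq_one_iff_adj]; exact hna
    omega

section adj
variable {m : ℕ} {α : Fin (3 * m) → ℕ} {C : Fin m → Finset (Fin (3 * m))}

lemma adj_atom {i : Fin (3 * m)} {a : Fin (α i)} {y} :
    (gadget m α C).Adj (Sum.inl ⟨i, a⟩) y ↔ y = Sum.inr (Sum.inl i) := by
  rcases y with ⟨j, b⟩ | j | ℓ <;>
    simp [gadget, SimpleGraph.fromRel_adj, eq_comm]

lemma adj_weight {i : Fin (3 * m)} {y} :
    (gadget m α C).Adj (Sum.inr (Sum.inl i)) y ↔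
      (∃ a : Fin (α i), y = Sum.inl ⟨i, a⟩) ∨ (∃ ℓ, i ∈ C ℓ ∧ y = Sum.inr (Sum.inr ℓ)) := by
  rcases y with ⟨j, b⟩ | j | ℓ <;>
    simp [gadget, SimpleGraph.fromRel_adj]
  rintro rfl; exact ⟨b, HEq.rfl⟩

lemma adj_basket {ℓ : Fin m} {y} :
    (gadget m α C).Adj (Sum.inr (Sum.inr ℓ)) y ↔
      ∃ i ∈ C ℓ, y = Sum.inr (Sum.inl i) := by
  rcases y with ⟨j, b⟩ | j | ℓ' <;>
    simp [gadget, SimpleGraph.fromRel_adj]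

lemma inl_mk_injective {i : Fin (3 * m)} :
    Function.Injective (fun b : Fin (α i) =>
      (Sum.inl ⟨i, b⟩ : (Σ i : Fin (3 * m), Fin (α i)) ⊕ (Fin (3 * m) ⊕ Fin m))) := by
  intro x y h
  simpa using h

lemma inr_inl_injective :
    Function.Injective (fun i : Fin (3 * m) =>
      (Sum.inr (Sum.inl i) : (Σ i : Fin (3 * m), Fin (α i)) ⊕ (Fin (3 * m) ⊕ Fin m))) := by
  intro x y h
  simpa using h

end adj

theorem stmt16 (m W : ℕ) (α : Fin (3 * m) → ℕ) (C : Fin m → Finset (Fin (3 * m)))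
    (hpart : ∀ i, ∃! ℓ, i ∈ C ℓ)
    (hcard : ∀ ℓ, (C ℓ).card = 3) (hsum : ∀ ℓ, ∑ i ∈ C ℓ, α i = W)
    (hlb : ∀ i, W < 4 * α i) (hub : ∀ i, 2 * α i < W) :
    (∀ i : Fin (3 * m), ∀ a : Fin (α i),
      ((gadget m α C).neighborSet (Sum.inl ⟨i, a⟩)).ncard = 1 ∧
      {u | (gadget m α C).dist (Sum.inl ⟨i, a⟩) u = 2}.ncard = α i) ∧
    (∀ i : Fin (3 * m),
      ((gadget m α C).neighborSet (Sum.inr (Sum.inl i))).ncard = α i + 1 ∧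
      {u | (gadget m α C).dist (Sum.inr (Sum.inl i)) u = 2}.ncard = 2) ∧
    (∀ ℓ : Fin m,
      ((gadget m α C).neighborSet (Sum.inr (Sum.inr ℓ))).ncard = 3 ∧
      {u | (gadget m α C).dist (Sum.inr (Sum.inr ℓ)) u = 2}.ncard = W) := by
  have hα : ∀ i, 0 < α i := fun i => by have := hlb i; have := hub i; omega
  refine ⟨?_, ?_, ?_⟩
  · -- atoms
    intro i a
    obtain ⟨ℓ₀, hℓ₀, huniq⟩ := hpart i
    constructor
    · have : (gadget m α C).neighborSet (Sum.inl ⟨i, a⟩) = {Sum.inr (Sum.inl i)} := by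
        ext u
        simp [SimpleGraph.mem_neighborSet, adj_atom]
      rw [this, Set.ncard_singleton]
    · have hset : {u | (gadget m α C).dist (Sum.inl ⟨i, a⟩) u = 2} =
          ↑(((univ.erase a).image fun b => (Sum.inl ⟨i, b⟩ :
              (Σ i : Fin (3 * m), Fin (α i)) ⊕ (Fin (3 * m) ⊕ Fin m))) ∪
            {Sum.inr (Sum.inr ℓ₀)}) := by
        ext u
        simp only [Set.mem_setOf_eq, dist_eq_two_iff', adj_atom, coe_union, coe_image,
          coe_singleton, Set.mem_union, Set.mem_image, mem_coe, mem_erase, mem_univ,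
          and_true, Set.mem_singleton_iff, exists_eq_left, adj_weight]
        constructor
        · rintro ⟨hne, -, (⟨b, rfl⟩ | ⟨ℓ, hℓ, rfl⟩)⟩
          · exact Or.inl ⟨b, fun h => hne (by rw [h]), rfl⟩
          · exact Or.inr (by rw [huniq ℓ hℓ])
        · rintro (⟨b, hb, rfl⟩ | rfl)
          · refine ⟨by simp [Ne.symm hb], by simp, Or.inl ⟨b, rfl⟩⟩
          · exact ⟨by simp, by simp, Or.inr ⟨ℓ₀, hℓ₀, rfl⟩⟩
      rw [hset, Set.ncard_coe_finset, card_union_of_disjoint (by simp),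
        card_image_of_injective _ inl_mk_injective, card_erase_of_mem (mem_univ a),
        card_univ, Fintype.card_fin, card_singleton]
      have := hα i; omega
  · -- weight points
    intro i
    obtain ⟨ℓ₀, hℓ₀, huniq⟩ := hpart i
    constructor
    · have : (gadget m α C).neighborSet (Sum.inr (Sum.inl i)) =
          ↑((univ.image fun b => (Sum.inl ⟨i, b⟩ :
              (Σ i : Fin (3 * m), Fin (α i)) ⊕ (Fin (3 * m) ⊕ Fin m))) ∪
            {Sum.inr (Sum.inr ℓ₀)}) := by
        ext u
        simp only [SimpleGraph.mem_neighborSet, adj_weight, coe_union, coe_image, coe_univ,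
          Set.image_univ, Set.mem_union, Set.mem_range, coe_singleton, Set.mem_singleton_iff]
        constructor
        · rintro (⟨b, rfl⟩ | ⟨ℓ, hℓ, rfl⟩)
          · exact Or.inl ⟨b, rfl⟩
          · exact Or.inr (by rw [huniq ℓ hℓ])
        · rintro (⟨b, rfl⟩ | rfl)
          · exact Or.inl ⟨b, rfl⟩
          · exact Or.inr ⟨ℓ₀, hℓ₀, rfl⟩
      rw [this, Set.ncard_coe_finset, card_union_of_disjoint (by simp),
        card_image_of_injective _ inl_mk_injective, card_univ, Fintype.card_fin, card_singleton]
    · have hset : {u | (gadget m α C).dist (Sum.inr (Sum.inl i)) u = 2} =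
          ↑(((C ℓ₀).erase i).image fun i' => (Sum.inr (Sum.inl i') :
              (Σ i : Fin (3 * m), Fin (α i)) ⊕ (Fin (3 * m) ⊕ Fin m))) := by
        ext u
        simp only [Set.mem_setOf_eq, dist_eq_two_iff', coe_image, Set.mem_image, mem_coe,
          mem_erase]
        constructor
        · rintro ⟨hne, hna, w, hw, hwu⟩
          rcases adj_weight.mp hw with ⟨b, rfl⟩ | ⟨ℓ, hℓ, rfl⟩
          · exact absurd (adj_atom.mp hwu).symm hne
          · obtain ⟨i', hi', rfl⟩ := adj_basket.mp hwu
            refine ⟨i', ⟨fun h => hne (by rw [h]), ?_⟩, rfl⟩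
            rwa [huniq ℓ hℓ] at hi'
        · rintro ⟨i', ⟨hi'ne, hi'⟩, rfl⟩
          refine ⟨by simp [Ne.symm hi'ne], ?_, Sum.inr (Sum.inr ℓ₀),
            adj_weight.mpr (Or.inr ⟨ℓ₀, hℓ₀, rfl⟩), adj_basket.mpr ⟨i', hi', rfl⟩⟩
          rw [adj_weight]
          push_neg
          refine ⟨fun a => by simp, fun ℓ h => by simp⟩
      rw [hset, Set.ncard_coe_finset, card_image_of_injective _ inr_inl_injective,
        card_erase_of_mem hℓ₀, hcard ℓ₀]
  · -- basket points
    intro ℓ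
    constructor
    · have : (gadget m α C).neighborSet (Sum.inr (Sum.inr ℓ)) =
          ↑((C ℓ).image fun i => (Sum.inr (Sum.inl i) :
              (Σ i : Fin (3 * m), Fin (α i)) ⊕ (Fin (3 * m) ⊕ Fin m))) := by
        ext u
        simp [SimpleGraph.mem_neighborSet, adj_basket, eq_comm]
      rw [this, Set.ncard_coe_finset, card_image_of_injective _ inr_inl_injective, hcard ℓ]
    · have hset : {u | (gadget m α C).dist (Sum.inr (Sum.inr ℓ)) u = 2} =
          ↑(((C ℓ).sigma fun i => (univ : Finset (Fin (α i)))).image fun p =>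
            (Sum.inl p : (Σ i : Fin (3 * m), Fin (α i)) ⊕ (Fin (3 * m) ⊕ Fin m))) := by
        ext u
        simp only [Set.mem_setOf_eq, dist_eq_two_iff', coe_image, Set.mem_image, mem_coe,
          mem_sigma, mem_univ, and_true]
        constructor
        · rintro ⟨hne, hna, w, hw, hwu⟩
          obtain ⟨i, hi, rfl⟩ := adj_basket.mp hw
          rcases adj_weight.mp hwu with ⟨b, rfl⟩ | ⟨ℓ', hℓ', rfl⟩
          · exact ⟨⟨i, b⟩, hi, rfl⟩
          · exact absurd (congrArg (fun x => Sum.inr (Sum.inr x))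
              ((hpart i).unique hℓ' hi)) (Ne.symm hne)
        · rintro ⟨⟨i, b⟩, hi, rfl⟩
          refine ⟨by simp, ?_, Sum.inr (Sum.inl i), adj_basket.mpr ⟨i, hi, rfl⟩,
            adj_weight.mpr (Or.inl ⟨b, rfl⟩)⟩
          rw [adj_basket]
          push_neg
          exact fun i' _ => by simp
      rw [hset, Set.ncard_coe_finset, card_image_of_injective _ Sum.inl_injective,
        card_sigma]
      simp [hsum ℓ]
end

section
/- If every instance of the Basket Filling problem with all basket capacities c_ℓ ≥ 2 and parameters satisfying wᵢ+1 ≠ c_j and wᵢ+1 ≠ n+k−1 is transformed by multiplying every wᵢ and every s_j by N = (n+k)·max_ℓ c_ℓ, then the original instance has a solution if and only if the scaled instance has a solution, and the scaled instance satisfies wᵢ'+1 ≠ c_j and wᵢ'+1 ≠ n+k−1 for all i, j. -/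
open Finset

/-- A solution of the Basket Filling problem: an ordered partition `C` of the items
with prescribed class cardinalities `c` and prescribed class weight sums `s`. -/
def BasketFillingSolution {n k : ℕ} (w : Fin n → ℕ) (c s : Fin k → ℕ)
    (C : Fin k → Finset (Fin n)) : Prop :=
  (∀ i, ∃! ℓ, i ∈ C ℓ) ∧ ∀ ℓ, (C ℓ).card = c ℓ ∧ ∑ i ∈ C ℓ, w i = s ℓ

theorem stmt17 (n k : ℕ) (hk : 0 < k) (w : Fin n → ℕ) (c s : Fin k → ℕ)
    (hw : ∀ i, 0 < w i) (hc : ∀ ℓ, 2 ≤ c ℓ)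
    (hcn : ∑ ℓ, c ℓ = n) (hsM : ∑ ℓ, s ℓ = ∑ i, w i)
    (N : ℕ) (hN : N = (n + k) * Finset.univ.sup c) :
    ((∃ C : Fin k → Finset (Fin n), BasketFillingSolution w c s C) ↔
      (∃ C : Fin k → Finset (Fin n),
        BasketFillingSolution (fun i => N * w i) c (fun ℓ => N * s ℓ) C)) ∧
    (∀ i j, N * w i + 1 ≠ c j) ∧ (∀ i, N * w i + 1 ≠ n + k - 1) := by
  have hk' : ∃ ℓ₀ : Fin k, True := ⟨⟨0, hk⟩, trivial⟩
  obtain ⟨ℓ₀, -⟩ := hk'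
  have hsup : ∀ j, c j ≤ univ.sup c := fun j => Finset.le_sup (mem_univ j)
  have hsup2 : 2 ≤ univ.sup c := le_trans (hc ℓ₀) (hsup ℓ₀)
  have hNbig : 2 * (n + k) ≤ N := by
    rw [hN]
    calc 2 * (n + k) = (n + k) * 2 := by ring
    _ ≤ (n + k) * univ.sup c := Nat.mul_le_mul_left _ hsup2
  have hkn : 1 ≤ n + k := le_trans hk (Nat.le_add_left k n)
  have hNpos : 0 < N := lt_of_lt_of_le (by omega) hNbig
  refine ⟨?_, ?_, ?_⟩
  · constructor
    · rintro ⟨C, hpart, hC⟩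
      exact ⟨C, hpart, fun ℓ => ⟨(hC ℓ).1, by
        rw [← Finset.mul_sum, (hC ℓ).2]⟩⟩
    · rintro ⟨C, hpart, hC⟩
      refine ⟨C, hpart, fun ℓ => ⟨(hC ℓ).1, ?_⟩⟩
      have := (hC ℓ).2
      rw [← Finset.mul_sum] at this
      exact Nat.eq_of_mul_eq_mul_left hNpos this
  · intro i j
    have h1 : 1 ≤ w i := hw i
    have : c j ≤ N := by
      calc c j ≤ univ.sup c := hsup j
      _ ≤ (n + k) * univ.sup c := Nat.le_mul_of_pos_left _ (by omega)
      _ = N := hN.symm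
    have : N ≤ N * w i := Nat.le_mul_of_pos_right _ h1
    omega
  · intro i
    have h1 : 1 ≤ w i := hw i
    have : N ≤ N * w i := Nat.le_mul_of_pos_right _ h1
    omega
end
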